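/- (Deterministic part of the median argument) Let v^(1),...,v^(T) ∈ ℝ^k, and let S ⊆ {1,...,T} be the set of indices s with ‖v^(s)‖₂² ≤ α. If |S| > 3T/4, then ‖median_s(v^(s))‖₂² ≤ 4α. -/

import Mathlib

/-- The median of a finite tuple of reals: the middle element (upper median)
of the sorted list of values. -/
noncomputable def medianVal {T : ℕ} (f : Fin T → ℝ) : ℝ :=
  (List.insertionSort (· ≤ ·) (List.ofFn f)).getD (T / 2) 0

/-- The coordinatewise median of a family of vectors in `ℝ^k`. -/
noncomputable def medianVec {T k : ℕ} (v : Fin T → EuclideanSpace ℝ (Fin k)) :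
    EuclideanSpace ℝ (Fin k) :=
  WithLp.toLp 2 (fun j => medianVal (fun s => v s j))

theorem card_filter_eq_countP' {T : ℕ} (f : Fin T → ℝ) (q : ℝ → Prop) [DecidablePred q] :
    (Finset.univ.filter (fun s => q (f s))).card = (List.ofFn f).countP (fun x => decide (q x)) := by
  rw [List.ofFn_eq_map, List.countP_map]
  rw [Fin.univ_def]
  simp only [Finset.filter, Finset.card, Multiset.filter_coe, Multiset.coe_card,
    List.countP_eq_length_filter]
  congr 1

theorem countP_ge_of_sorted' (l : List ℝ) (hl : l.Pairwise (· ≤ ·)) (i : ℕ) (hi : i < l.length) :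
    l.length - i ≤ l.countP (fun x => decide (l.get ⟨i, hi⟩ ≤ x)) := by
  set m := l.get ⟨i, hi⟩ with hm
  have h1 : (l.drop i).countP (fun x => decide (m ≤ x)) = (l.drop i).length := by
    rw [List.countP_eq_length]
    intro a ha
    rw [List.mem_iff_get] at ha
    obtain ⟨n, rfl⟩ := ha
    have hn := n.isLt
    simp only [List.length_drop] at hn
    simp only [List.get_eq_getElem, decide_eq_true_eq, hm]
    rw [← List.getElem_drop' (by omega)]
    have h3 : l[i + (n : ℕ)]'(by omega) = l.get ⟨i + (n : ℕ), by omega⟩ := rfl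
    rw [h3]
    exact hl.rel_get_of_le (by simp)
  have h2 : (l.drop i).length = l.length - i := by simp
  calc l.length - i = (l.drop i).countP (fun x => decide (m ≤ x)) := by rw [h1, h2]
    _ ≤ l.countP (fun x => decide (m ≤ x)) := by
        conv_rhs => rw [← List.take_append_drop i l]
        rw [List.countP_append]; omega

theorem countP_le_of_sorted' (l : List ℝ) (hl : l.Pairwise (· ≤ ·)) (i : ℕ) (hi : i < l.length) :
    i + 1 ≤ l.countP (fun x => decide (x ≤ l.get ⟨i, hi⟩)) := by
  set m := l.get ⟨i, hi⟩ with hm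
  have h1 : (l.take (i+1)).countP (fun x => decide (x ≤ m)) = (l.take (i+1)).length := by
    rw [List.countP_eq_length]
    intro a ha
    rw [List.mem_iff_get] at ha
    obtain ⟨n, rfl⟩ := ha
    have hn := n.isLt
    simp only [List.length_take] at hn
    simp only [List.get_eq_getElem, decide_eq_true_eq, hm]
    rw [List.getElem_take]
    have h3 : l[(n : ℕ)]'(by omega) = l.get ⟨(n : ℕ), by omega⟩ := rfl
    rw [h3]
    exact hl.rel_get_of_le (by simp; omega)
  have h2 : (l.take (i+1)).length = i + 1 := by simp; omega
  calc i + 1 = (l.take (i+1)).countP (fun x => decide (x ≤ m)) := by rw [h1, h2]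
    _ ≤ l.countP (fun x => decide (x ≤ m)) := by
        conv_rhs => rw [← List.take_append_drop (i+1) l]
        rw [List.countP_append]; omega

theorem medianVal_key {T : ℕ} (f : Fin T → ℝ) (S : Finset (Fin T))
    (hS : (3 * (T : ℝ)) / 4 < S.card) :
    (T : ℝ) / 4 * (medianVal f) ^ 2 ≤ ∑ s ∈ S, (f s) ^ 2 := by
  -- T is positive
  have hcardT : S.card ≤ T := by
    simpa using Finset.card_le_univ S
  have hT : 0 < T := by
    rcases Nat.eq_zero_or_pos T with h | h
    · subst h
      rw [Nat.le_zero.mp hcardT] at hS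
      norm_num at hS
    · exact h
  set l := List.insertionSort (· ≤ ·) (List.ofFn f) with hl
  have hlen : l.length = T := by
    rw [hl, List.length_insertionSort, List.length_ofFn]
  have hidx : T / 2 < l.length := by omega
  have hsort : l.Pairwise (· ≤ ·) := List.pairwise_insertionSort _ _
  have hperm : l.Perm (List.ofFn f) := List.perm_insertionSort _ _
  set m := medianVal f with hmdef
  have hm : m = l.get ⟨T / 2, hidx⟩ := by
    rw [hmdef, medianVal, ← hl]
    exact List.getD_eq_get l 0 ⟨T / 2, hidx⟩
  have hhalf : ((T / 2 : ℕ) : ℝ) ≤ (T : ℝ) / 2 := by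
    have h0 : 2 * (T / 2) ≤ T := by omega
    have h2 : ((2 * (T / 2) : ℕ) : ℝ) ≤ (T : ℝ) := by exact_mod_cast h0
    push_cast at h2
    linarith
  have hhalf2 : (T : ℝ) / 2 ≤ ((T / 2 : ℕ) : ℝ) + 1 := by
    have h0 : T ≤ 2 * (T / 2) + 2 := by omega
    have h2 : ((T : ℕ) : ℝ) ≤ ((2 * (T / 2) + 2 : ℕ) : ℝ) := by exact_mod_cast h0
    push_cast at h2
    linarith
  -- the generic inequality given a large set of indices s with m² ≤ (f s)²
  have main : ∀ (A : Finset (Fin T)), (T : ℝ) / 2 ≤ A.card →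
      (∀ s ∈ A, m ^ 2 ≤ (f s) ^ 2) → (T : ℝ) / 4 * m ^ 2 ≤ ∑ s ∈ S, (f s) ^ 2 := by
    intro A hA hAsq
    have hinter : (T : ℝ) / 4 ≤ ((S ∩ A).card : ℝ) := by
      have h1 : (S ∪ A).card + (S ∩ A).card = S.card + A.card :=
        Finset.card_union_add_card_inter S A
      have h2 : (S ∪ A).card ≤ T := by simpa using Finset.card_le_univ (S ∪ A)
      have h1' : ((S ∪ A).card : ℝ) + ((S ∩ A).card : ℝ) = (S.card : ℝ) + (A.card : ℝ) := by
        exact_mod_cast h1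
      have h2' : ((S ∪ A).card : ℝ) ≤ (T : ℝ) := by exact_mod_cast h2
      linarith
    calc (T : ℝ) / 4 * m ^ 2 ≤ ((S ∩ A).card : ℝ) * m ^ 2 :=
          mul_le_mul_of_nonneg_right hinter (sq_nonneg m)
      _ = ∑ s ∈ S ∩ A, m ^ 2 := by rw [Finset.sum_const, nsmul_eq_mul]
      _ ≤ ∑ s ∈ S ∩ A, (f s) ^ 2 :=
          Finset.sum_le_sum (fun s hs => hAsq s (Finset.mem_inter.mp hs).2)
      _ ≤ ∑ s ∈ S, (f s) ^ 2 :=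
          Finset.sum_le_sum_of_subset_of_nonneg Finset.inter_subset_left
            (fun s _ _ => sq_nonneg _)
  rcases le_or_gt 0 m with hm0 | hm0
  · -- m ≥ 0 : use indices with m ≤ f s
    apply main (Finset.univ.filter (fun s => m ≤ f s))
    · have hcount := countP_ge_of_sorted' l hsort (T / 2) hidx
      rw [← hm] at hcount
      rw [hperm.countP_eq] at hcount
      rw [card_filter_eq_countP' f (fun x => m ≤ x)]
      have : (T : ℝ) - ((T / 2 : ℕ) : ℝ) ≤ ((l.length - T / 2 : ℕ) : ℝ) := by
        rw [hlen]
        rw [Nat.cast_sub (by omega)]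
      have h4 : ((l.length - T / 2 : ℕ) : ℝ) ≤
          ((List.countP (fun x => decide (m ≤ x)) (List.ofFn f) : ℕ) : ℝ) := by
        exact_mod_cast hcount
      linarith
    · intro s hs
      rw [Finset.mem_filter] at hs
      exact pow_le_pow_left₀ hm0 hs.2 2
  · -- m < 0 : use indices with f s ≤ m
    apply main (Finset.univ.filter (fun s => f s ≤ m))
    · have hcount := countP_le_of_sorted' l hsort (T / 2) hidx
      rw [← hm] at hcount
      rw [hperm.countP_eq] at hcount
      rw [card_filter_eq_countP' f (fun x => x ≤ m)]
      have h4 : ((T / 2 + 1 : ℕ) : ℝ) ≤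
          ((List.countP (fun x => decide (x ≤ m)) (List.ofFn f) : ℕ) : ℝ) := by
        exact_mod_cast hcount
      push_cast at h4
      linarith [hhalf2]
    · intro s hs
      rw [Finset.mem_filter] at hs
      have h1 : f s ≤ m := hs.2
      nlinarith

theorem euclid_norm_sq_eq {k : ℕ} (x : EuclideanSpace ℝ (Fin k)) :
    ‖x‖ ^ 2 = ∑ i, (x i) ^ 2 := by
  rw [EuclideanSpace.norm_eq, Real.sq_sqrt (by positivity)]
  simp [sq_abs]

/-- if `‖v s‖² ≤ α` for more than `3T/4` of the indices `s`,
then the coordinatewise median satisfies `‖median‖² ≤ 4α`. -/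
theorem stmt2 {T k : ℕ} (v : Fin T → EuclideanSpace ℝ (Fin k)) (α : ℝ) (hα : 0 < α)
    (hS : (3 * T : ℝ) / 4 < (Finset.univ.filter (fun s => ‖v s‖ ^ 2 ≤ α)).card) :
    ‖medianVec v‖ ^ 2 ≤ 4 * α := by
  set S := Finset.univ.filter (fun s => ‖v s‖ ^ 2 ≤ α) with hSdef
  have hcardT : S.card ≤ T := by simpa using Finset.card_le_univ S
  have hT : 0 < T := by
    rcases Nat.eq_zero_or_pos T with h | h
    · subst h
      rw [Nat.le_zero.mp hcardT] at hS
      norm_num at hS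
    · exact h
  have hkey : ∀ j : Fin k,
      (T : ℝ) / 4 * (medianVal (fun s => v s j)) ^ 2 ≤ ∑ s ∈ S, (v s j) ^ 2 :=
    fun j => medianVal_key _ S hS
  have hsum : (T : ℝ) / 4 * ‖medianVec v‖ ^ 2 ≤ (T : ℝ) * α := by
    rw [euclid_norm_sq_eq]
    rw [Finset.mul_sum]
    calc ∑ j, (T : ℝ) / 4 * (medianVec v j) ^ 2 ≤ ∑ j, ∑ s ∈ S, (v s j) ^ 2 :=
          Finset.sum_le_sum (fun j _ => hkey j)
      _ = ∑ s ∈ S, ∑ j, (v s j) ^ 2 := Finset.sum_comm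
      _ = ∑ s ∈ S, ‖v s‖ ^ 2 := by
          refine Finset.sum_congr rfl (fun s _ => ?_)
          rw [euclid_norm_sq_eq]
      _ ≤ ∑ s ∈ S, α := by
          refine Finset.sum_le_sum (fun s hs => ?_)
          rw [hSdef, Finset.mem_filter] at hs
          exact hs.2
      _ = (S.card : ℝ) * α := by rw [Finset.sum_const, nsmul_eq_mul]
      _ ≤ (T : ℝ) * α := by
          have : (S.card : ℝ) ≤ (T : ℝ) := by exact_mod_cast hcardT
          exact mul_le_mul_of_nonneg_right this hα.le
  have hTpos : (0 : ℝ) < T := by exact_mod_cast hT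
  nlinarith [hsum, sq_nonneg ‖medianVec v‖]
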